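/- Let H be a normed VH-space over a Banach ordered *-space Z. Then the *-algebra L*(H) of all adjointable linear operators T : H → H, with the operator norm ‖T‖ := sup{‖Tx‖_H : x ∈ H, ‖x‖_H ≤ 1} (where ‖x‖_H = ‖[x,x]‖^{1/2}), is a C*-algebra: every adjointable operator is bounded, ‖T*‖ = ‖T‖, ‖S ∘ T‖ ≤ ‖S‖ ‖T‖, ‖T* ∘ T‖ = ‖T‖², and L*(H) is complete in this norm. -/

import Mathlib

open scoped ComplexConjugate Topology

/-- The data of an ordered `*`-space structure on a complex vector space `Z`:
a conjugate-linear involution and a strict convex cone of selfadjoint elements. -/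
structure OrderedStarData (Z : Type*) [AddCommGroup Z] [Module ℂ Z] where
  star : Z → Z
  star_add : ∀ x y : Z, star (x + y) = star x + star y
  star_smul : ∀ (c : ℂ) (x : Z), star (c • x) = (starRingEnd ℂ) c • star x
  star_star : ∀ x : Z, star (star x) = x
  cone : Set Z
  cone_zero : (0 : Z) ∈ cone
  cone_add : ∀ x ∈ cone, ∀ y ∈ cone, x + y ∈ cone
  cone_smul : ∀ r : ℝ, 0 ≤ r → ∀ x ∈ cone, (r : ℂ) • x ∈ cone
  cone_strict : ∀ x ∈ cone, -x ∈ cone → x = 0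
  cone_star : ∀ x ∈ cone, star x = x

namespace OrderedStarData

variable {Z : Type*} [AddCommGroup Z] [Module ℂ Z]

/-- A seminorm is increasing when `0 ≤ x ≤ y` implies `p x ≤ p y`. -/
def Increasing (D : OrderedStarData Z) (p : Seminorm ℂ Z) : Prop :=
  ∀ x y : Z, x ∈ D.cone → y - x ∈ D.cone → p x ≤ p y

/-- A `*`-seminorm: `p (z*) = p z`. -/
def StarSeminorm (D : OrderedStarData Z) (p : Seminorm ℂ Z) : Prop :=
  ∀ z : Z, p (D.star z) = p z

end OrderedStarData

/-- A topologically ordered `*`-space: an ordered `*`-space with a Hausdorff locally convex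
topology generated by a family of increasing seminorms, continuous involution and closed cone. -/
structure TopOrderedStarSpace (Z : Type*) [AddCommGroup Z] [Module ℂ Z]
    [TopologicalSpace Z] extends OrderedStarData Z where
  t2 : T2Space Z
  star_continuous : Continuous star
  cone_closed : IsClosed cone
  seminorms_generate : ∃ (ι : Type) (hι : Nonempty ι) (q : ι → Seminorm ℂ Z),
      (∀ i, ∀ x y : Z, x ∈ cone → y - x ∈ cone → q i x ≤ q i y) ∧
      (letI := hι; WithSeminorms q)

namespace TopOrderedStarSpace

variable {Z : Type*} [AddCommGroup Z] [Module ℂ Z] [TopologicalSpace Z]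

/-- Membership in `S_*(Z)`, the set of continuous increasing `*`-seminorms. -/
def MemSStar (D : TopOrderedStarSpace Z) (p : Seminorm ℂ Z) : Prop :=
  Continuous ⇑p ∧ D.toOrderedStarData.Increasing p ∧ D.toOrderedStarData.StarSeminorm p

end TopOrderedStarSpace

/-- The topology of `Z` is generated by the family of seminorms `S`. -/
def GeneratesTopology {Z : Type*} [AddCommGroup Z] [Module ℂ Z] [TopologicalSpace Z]
    (S : Set (Seminorm ℂ Z)) : Prop :=
  ∃ h : Nonempty ↥S, letI := h; WithSeminorms (fun p : ↥S => (p : Seminorm ℂ Z))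

/-- A `Z`-valued gramian (vector valued inner product) on `E`, making `E` a VE-space over `Z`. -/
structure Gramian {Z : Type*} [AddCommGroup Z] [Module ℂ Z] (D : OrderedStarData Z)
    (E : Type*) [AddCommGroup E] [Module ℂ E] where
  inner : E → E → Z
  inner_self_mem : ∀ x : E, inner x x ∈ D.cone
  inner_self_eq_zero : ∀ x : E, inner x x = 0 → x = 0
  inner_herm : ∀ x y : E, inner x y = D.star (inner y x)
  inner_add_right : ∀ x y₁ y₂ : E, inner x (y₁ + y₂) = inner x y₁ + inner x y₂
  inner_smul_right : ∀ (a : ℂ) (x y : E), inner x (a • y) = a • inner x y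

namespace Gramian

variable {Z : Type*} [AddCommGroup Z] [Module ℂ Z] {D : OrderedStarData Z}
  {E : Type*} [AddCommGroup E] [Module ℂ E]
  {F : Type*} [AddCommGroup F] [Module ℂ F]

/-- The seminorm `p̃ x = p ([x,x])^{1/2}` induced on a VE-space by a seminorm on `Z`. -/
noncomputable def tilde (B : Gramian D E) (p : Seminorm ℂ Z) (x : E) : ℝ :=
  Real.sqrt (p (B.inner x x))

/-- `S` is an adjoint of `T` : `[Tx, y] = [x, Sy]`. -/
def IsAdjoint (BE : Gramian D E) (BF : Gramian D F) (T : E →ₗ[ℂ] F) (S : F →ₗ[ℂ] E) : Prop :=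
  ∀ (x : E) (y : F), BF.inner (T x) y = BE.inner x (S y)

/-- `T` is adjointable. -/
def Adjointable (BE : Gramian D E) (BF : Gramian D F) (T : E →ₗ[ℂ] F) : Prop :=
  ∃ S : F →ₗ[ℂ] E, BE.IsAdjoint BF T S

/-- `T` is bounded for the seminorm `p` : `p̃ (Tx) ≤ C p̃ x`. -/
def BoundedFor (BE : Gramian D E) (BF : Gramian D F) (T : E →ₗ[ℂ] F) (p : Seminorm ℂ Z) : Prop :=
  ∃ C : ℝ, 0 ≤ C ∧ ∀ x : E, BF.tilde p (T x) ≤ C * BE.tilde p x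

/-- The operator seminorm `p̄ T`, the infimum of the admissible bounds. -/
noncomputable def opSeminorm (BE : Gramian D E) (BF : Gramian D F) (T : E →ₗ[ℂ] F)
    (p : Seminorm ℂ Z) : ℝ :=
  sInf {C : ℝ | 0 ≤ C ∧ ∀ x : E, BF.tilde p (T x) ≤ C * BE.tilde p x}

/-- The topology of `E` is the one of a topological VE-space: it is generated by the
seminorms `p̃` for `p ∈ S`. -/
def IsVETopology [TopologicalSpace E] (B : Gramian D E) (S : Set (Seminorm ℂ Z)) : Prop :=
  ∃ h : Nonempty ↥S, letI := h;
    ∃ q : ↥S → Seminorm ℂ E, (∀ (p : ↥S) (x : E), q p x = B.tilde p.1 x) ∧ WithSeminorms q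

end Gramian

/-- A barrel: a closed, absorbent, balanced, convex set. -/
def IsBarrel {E : Type*} [AddCommGroup E] [Module ℂ E] [TopologicalSpace E] (s : Set E) : Prop :=
  IsClosed s ∧ Absorbent ℂ s ∧ Balanced ℂ s ∧ Convex ℝ s

/-- A (complex) topological vector space is barrelled if every barrel is a neighbourhood of `0`. -/
def BarrelledSp (E : Type*) [AddCommGroup E] [Module ℂ E] [TopologicalSpace E] : Prop :=
  ∀ s : Set E, IsBarrel s → s ∈ 𝓝 (0 : E)

/-- A barrel with respect to the topology of a norm function `N`. -/
def IsBarrelWrtNorm {V : Type*} [AddCommGroup V] [Module ℂ V] (N : V → ℝ) (s : Set V) : Prop :=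
  (∀ x : V, (∀ ε : ℝ, 0 < ε → ∃ y ∈ s, N (x - y) < ε) → x ∈ s) ∧
  Absorbent ℂ s ∧ Balanced ℂ s ∧ Convex ℝ s

/-- Barrelledness with respect to the topology of a norm function `N`. -/
def BarrelledWrtNorm {V : Type*} [AddCommGroup V] [Module ℂ V] (N : V → ℝ) : Prop :=
  ∀ s : Set V, IsBarrelWrtNorm N s → ∃ ε : ℝ, 0 < ε ∧ ∀ x : V, N x < ε → x ∈ s

/-- The kernel of a seminorm, as a submodule. -/
def semKer {Z : Type*} [AddCommGroup Z] [Module ℂ Z] (p : Seminorm ℂ Z) : Submodule ℂ Z where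
  carrier := {z | p z = 0}
  add_mem' := by
    intro a b ha hb
    simp only [Set.mem_setOf_eq] at ha hb ⊢
    exact le_antisymm ((map_add_le_add p a b).trans (by simp [ha, hb])) (apply_nonneg p _)
  zero_mem' := map_zero p
  smul_mem' := by
    intro c x hx
    simp only [Set.mem_setOf_eq] at hx ⊢
    rw [map_smul_eq_mul, hx, mul_zero]

/-- The operator norm of an operator on a normed VH-space:
`‖T‖ = sup {‖Tx‖_H : ‖x‖_H ≤ 1}`. -/
noncomputable def vhOpNorm {Z H : Type*} [NormedAddCommGroup Z] [NormedSpace ℂ Z]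
    {D : OrderedStarData Z} [AddCommGroup H] [Module ℂ H]
    (BH : Gramian D H) (T : H →ₗ[ℂ] H) : ℝ :=
  sSup ((fun x => Real.sqrt ‖BH.inner (T x) (T x)‖) ''
    {x : H | Real.sqrt ‖BH.inner x x‖ ≤ 1})

namespace S18

open OrderedStarData

variable {Z : Type*} [NormedAddCommGroup Z] [NormedSpace ℂ Z]
variable {D : OrderedStarData Z}
variable {H : Type*} [AddCommGroup H] [Module ℂ H]

lemma star_zero (D : OrderedStarData Z) : D.star 0 = 0 := by
  have := D.star_smul 0 0
  simpa using this

lemma inner_star (BH : Gramian D H) (x y : H) :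
    D.star (BH.inner x y) = BH.inner y x := by
  rw [BH.inner_herm x y, D.star_star]

lemma inner_add_left (BH : Gramian D H) (x y z : H) :
    BH.inner (x + y) z = BH.inner x z + BH.inner y z := by
  rw [← inner_star BH z (x + y), BH.inner_add_right, D.star_add,
    inner_star, inner_star]

lemma inner_smul_left (BH : Gramian D H) (c : ℂ) (x y : H) :
    BH.inner (c • x) y = (starRingEnd ℂ) c • BH.inner x y := by
  rw [← inner_star BH y (c • x), BH.inner_smul_right, D.star_smul, inner_star]

lemma inner_zero_right (BH : Gramian D H) (x : H) : BH.inner x 0 = 0 := by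
  have := BH.inner_smul_right 0 x 0
  simpa using this

lemma inner_zero_left (BH : Gramian D H) (x : H) : BH.inner 0 x = 0 := by
  rw [← inner_star BH x 0, inner_zero_right, star_zero]

lemma inner_neg_right (BH : Gramian D H) (x y : H) : BH.inner x (-y) = -BH.inner x y := by
  have := BH.inner_smul_right (-1) x y
  simpa using this

lemma inner_neg_left (BH : Gramian D H) (x y : H) : BH.inner (-x) y = -BH.inner x y := by
  have := inner_smul_left BH (-1) x y
  simpa using this

lemma inner_sub_right (BH : Gramian D H) (x y z : H) :
    BH.inner x (y - z) = BH.inner x y - BH.inner x z := by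
  rw [sub_eq_add_neg, BH.inner_add_right, inner_neg_right, ← sub_eq_add_neg]

lemma inner_sub_left (BH : Gramian D H) (x y z : H) :
    BH.inner (x - y) z = BH.inner x z - BH.inner y z := by
  rw [sub_eq_add_neg, inner_add_left, inner_neg_left, ← sub_eq_add_neg]

/-- The canonical norm candidate on a VE-space. -/
noncomputable def nH (BH : Gramian D H) (x : H) : ℝ := Real.sqrt ‖BH.inner x x‖

lemma nH_nonneg (BH : Gramian D H) (x : H) : 0 ≤ nH BH x := Real.sqrt_nonneg _

lemma nH_sq (BH : Gramian D H) (x : H) : nH BH x ^ 2 = ‖BH.inner x x‖ :=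
  Real.sq_sqrt (norm_nonneg _)

lemma nH_zero (BH : Gramian D H) : nH BH (0 : H) = 0 := by
  simp [nH, inner_zero_left]

lemma nH_eq_zero (BH : Gramian D H) {x : H} (h : nH BH x = 0) : x = 0 := by
  apply BH.inner_self_eq_zero
  have h2 : ‖BH.inner x x‖ = 0 := by
    have := nH_sq BH x
    rw [h] at this
    simpa using this.symm
  simpa using h2

lemma nH_smul (BH : Gramian D H) (c : ℂ) (x : H) :
    nH BH (c • x) = ‖c‖ * nH BH x := by
  have h : BH.inner (c • x) (c • x) = ((‖c‖ ^ 2 : ℝ) : ℂ) • BH.inner x x := by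
    rw [BH.inner_smul_right, inner_smul_left, smul_smul]
    congr 1
    rw [mul_comm, Complex.conj_mul']
    norm_cast
  rw [nH, h, norm_smul]
  rw [Real.sqrt_mul (norm_nonneg _)]
  congr 1
  rw [Complex.norm_real, Real.norm_eq_abs, abs_of_nonneg (by positivity),
    Real.sqrt_sq (norm_nonneg c)]

lemma nH_neg (BH : Gramian D H) (x : H) : nH BH (-x) = nH BH x := by
  have := nH_smul BH (-1) x
  simpa using this

end S18

namespace S18

variable {Z : Type*} [NormedAddCommGroup Z] [NormedSpace ℂ Z]
variable {D : OrderedStarData Z}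
variable {H : Type*} [AddCommGroup H] [Module ℂ H]

lemma inner_expand (BH : Gramian D H) (c : ℂ) (x y : H) :
    BH.inner (x + c • y) (x + c • y) =
      BH.inner x x + (c • BH.inner x y + (starRingEnd ℂ) c • BH.inner y x)
        + (c * (starRingEnd ℂ) c) • BH.inner y y := by
  rw [BH.inner_add_right, inner_add_left, inner_add_left, BH.inner_smul_right,
    BH.inner_smul_right, inner_smul_left, inner_smul_left, smul_smul]
  abel

lemma inner_expand_add (BH : Gramian D H) (x y : H) :
    BH.inner (x + y) (x + y) =
      BH.inner x x + (BH.inner x y + BH.inner y x) + BH.inner y y := by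
  have := inner_expand BH 1 x y
  simpa using this

lemma inner_expand_sub (BH : Gramian D H) (x y : H) :
    BH.inner (x - y) (x - y) =
      BH.inner x x - (BH.inner x y + BH.inner y x) + BH.inner y y := by
  have h := inner_expand BH (-1) x y
  simp only [map_one, neg_smul, one_smul, neg_mul, mul_neg, neg_neg, map_neg, one_mul] at h
  rw [sub_eq_add_neg x y, h]
  abel

/-- Crude bound: `‖[x,y]‖ ≤ 3 ‖[x,x] + [y,y]‖`. -/
lemma inner_norm_le_aux (BH : Gramian D H)
    (hinc : ∀ x y : Z, x ∈ D.cone → y - x ∈ D.cone → ‖x‖ ≤ ‖y‖) (x y : H) :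
    ‖BH.inner x y‖ ≤ 3 * ‖BH.inner x x + BH.inner y y‖ := by
  set A := BH.inner x x with hA
  set C := BH.inner y y with hC
  -- generic step
  have key : ∀ b : Z, A + C + b ∈ D.cone → A + C - b ∈ D.cone → ‖b‖ ≤ 3 * ‖A + C‖ := by
    intro b h1 h2
    have h3 : ‖A + C + b‖ ≤ ‖(A + C) + (A + C)‖ := by
      apply hinc _ _ h1
      have : (A + C) + (A + C) - (A + C + b) = A + C - b := by abel
      rw [this]; exact h2
    have h4 : ‖b‖ ≤ ‖A + C + b‖ + ‖A + C‖ := by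
      have : b = (A + C + b) - (A + C) := by abel
      conv_lhs => rw [this]
      exact norm_sub_le _ _
    have h5 : ‖(A + C) + (A + C)‖ ≤ 2 * ‖A + C‖ := by
      rw [two_mul]; exact norm_add_le _ _
    linarith
  have hb : ‖BH.inner x y + BH.inner y x‖ ≤ 3 * ‖A + C‖ := by
    apply key
    · have := inner_expand_add BH x y
      have h : A + C + (BH.inner x y + BH.inner y x) = BH.inner (x + y) (x + y) := by
        rw [this]; abel
      rw [h]; exact BH.inner_self_mem _
    · have := inner_expand_sub BH x y
      have h : A + C - (BH.inner x y + BH.inner y x) = BH.inner (x - y) (x - y) := by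
        rw [this]; abel
      rw [h]; exact BH.inner_self_mem _
  have hb' : ‖Complex.I • BH.inner x y - Complex.I • BH.inner y x‖ ≤ 3 * ‖A + C‖ := by
    apply key
    · have h : A + C + (Complex.I • BH.inner x y - Complex.I • BH.inner y x)
          = BH.inner (x + Complex.I • y) (x + Complex.I • y) := by
        rw [inner_expand BH Complex.I x y, Complex.conj_I]
        simp only [neg_smul, mul_neg, Complex.I_mul_I, neg_neg, one_smul]
        abel
      rw [h]; exact BH.inner_self_mem _
    · have h : A + C - (Complex.I • BH.inner x y - Complex.I • BH.inner y x)
          = BH.inner (x + (-Complex.I) • y) (x + (-Complex.I) • y) := by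
        rw [inner_expand BH (-Complex.I) x y]
        simp only [map_neg, Complex.conj_I, neg_neg, neg_smul, neg_mul, mul_neg,
          Complex.I_mul_I, one_smul]
        abel
      rw [h]; exact BH.inner_self_mem _
  have hcomb : (2 : ℂ) • BH.inner x y = (BH.inner x y + BH.inner y x)
      - Complex.I • (Complex.I • BH.inner x y - Complex.I • BH.inner y x) := by
    rw [smul_sub, smul_smul, smul_smul, Complex.I_mul_I, neg_smul, one_smul]
    module
  have h2 : (2:ℝ) * ‖BH.inner x y‖ ≤ 3 * ‖A + C‖ + 3 * ‖A + C‖ := by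
    have hn : ‖(2 : ℂ) • BH.inner x y‖ = 2 * ‖BH.inner x y‖ := by
      rw [norm_smul]; norm_num
    calc (2:ℝ) * ‖BH.inner x y‖ = ‖(2 : ℂ) • BH.inner x y‖ := hn.symm
      _ ≤ ‖BH.inner x y + BH.inner y x‖
          + ‖Complex.I • (Complex.I • BH.inner x y - Complex.I • BH.inner y x)‖ := by
            rw [hcomb]; exact norm_sub_le _ _
      _ ≤ 3 * ‖A + C‖ + 3 * ‖A + C‖ := by
          rw [norm_smul, Complex.norm_I, one_mul]
          exact add_le_add hb hb'
  linarith

end S18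

namespace S18

variable {Z : Type*} [NormedAddCommGroup Z] [NormedSpace ℂ Z]
variable {D : OrderedStarData Z}
variable {H : Type*} [AddCommGroup H] [Module ℂ H]

/-- Continuity bound for the gramian: `‖[x,y]‖ ≤ 6 ‖x‖ ‖y‖`. -/
lemma inner_norm_le (BH : Gramian D H)
    (hinc : ∀ x y : Z, x ∈ D.cone → y - x ∈ D.cone → ‖x‖ ≤ ‖y‖) (x y : H) :
    ‖BH.inner x y‖ ≤ 6 * nH BH x * nH BH y := by
  by_cases hx : nH BH x = 0
  · rw [nH_eq_zero BH hx, inner_zero_left, nH_zero]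
    simp
  by_cases hy : nH BH y = 0
  · rw [nH_eq_zero BH hy, inner_zero_right, nH_zero]
    simp
  have hx0 : 0 < nH BH x := lt_of_le_of_ne (nH_nonneg BH x) (Ne.symm hx)
  have hy0 : 0 < nH BH y := lt_of_le_of_ne (nH_nonneg BH y) (Ne.symm hy)
  set r : ℝ := Real.sqrt (nH BH y / nH BH x) with hr
  have hrpos : 0 < r := Real.sqrt_pos.2 (div_pos hy0 hx0)
  have hrsq : r ^ 2 = nH BH y / nH BH x := Real.sq_sqrt (le_of_lt (div_pos hy0 hx0))
  have hkey := inner_norm_le_aux BH hinc (((r : ℂ)) • x) (((r⁻¹ : ℝ) : ℂ) • y)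
  have h1 : BH.inner (((r : ℂ)) • x) (((r⁻¹ : ℝ) : ℂ) • y) = BH.inner x y := by
    rw [BH.inner_smul_right, inner_smul_left, smul_smul]
    have : ((r⁻¹ : ℝ) : ℂ) * (starRingEnd ℂ) ((r : ℝ) : ℂ) = 1 := by
      rw [Complex.conj_ofReal]
      norm_cast
      field_simp
    rw [this, one_smul]
  rw [h1] at hkey
  have h2 : ‖BH.inner (((r : ℂ)) • x) (((r : ℂ)) • x) + BH.inner (((r⁻¹ : ℝ) : ℂ) • y) (((r⁻¹ : ℝ) : ℂ) • y)‖
      ≤ 2 * (nH BH x * nH BH y) := by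
    have e1 : nH BH (((r : ℂ)) • x) ^ 2 = r ^ 2 * nH BH x ^ 2 := by
      rw [nH_smul]
      rw [mul_pow]
      congr 2
      rw [Complex.norm_real, Real.norm_eq_abs, abs_of_pos hrpos]
    have e2 : nH BH ((((r⁻¹ : ℝ)) : ℂ) • y) ^ 2 = (r⁻¹) ^ 2 * nH BH y ^ 2 := by
      rw [nH_smul, mul_pow]
      congr 2
      rw [Complex.norm_real, Real.norm_eq_abs, abs_of_pos (by positivity)]
    have b1 : ‖BH.inner (((r : ℂ)) • x) (((r : ℂ)) • x)‖ = r ^ 2 * nH BH x ^ 2 := by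
      rw [← nH_sq, e1]
    have b2 : ‖BH.inner ((((r⁻¹ : ℝ)) : ℂ) • y) ((((r⁻¹ : ℝ)) : ℂ) • y)‖ = (r⁻¹) ^ 2 * nH BH y ^ 2 := by
      rw [← nH_sq, e2]
    have hval1 : r ^ 2 * nH BH x ^ 2 = nH BH y * nH BH x := by
      rw [hrsq]
      field_simp
    have hval2 : (r⁻¹) ^ 2 * nH BH y ^ 2 = nH BH x * nH BH y := by
      rw [inv_pow, hrsq]
      field_simp
    calc ‖_ + _‖ ≤ ‖BH.inner (((r : ℂ)) • x) (((r : ℂ)) • x)‖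
          + ‖BH.inner ((((r⁻¹ : ℝ)) : ℂ) • y) ((((r⁻¹ : ℝ)) : ℂ) • y)‖ := norm_add_le _ _
      _ = nH BH y * nH BH x + nH BH x * nH BH y := by rw [b1, b2, hval1, hval2]
      _ = 2 * (nH BH x * nH BH y) := by ring
  calc ‖BH.inner x y‖ ≤ 3 * ‖_ + _‖ := hkey
    _ ≤ 3 * (2 * (nH BH x * nH BH y)) := by linarith
    _ = 6 * nH BH x * nH BH y := by ring

end S18

namespace S18

variable {Z : Type*} [NormedAddCommGroup Z] [NormedSpace ℂ Z]

/-- The real span of the cone, as a real submodule of `Z`. -/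
def coneSpan (D : OrderedStarData Z) : Submodule ℝ Z where
  carrier := {z | ∃ w₁ ∈ D.cone, ∃ w₂ ∈ D.cone, z = w₁ - w₂}
  zero_mem' := ⟨0, D.cone_zero, 0, D.cone_zero, by simp⟩
  add_mem' := by
    rintro a b ⟨w₁, h₁, w₂, h₂, rfl⟩ ⟨v₁, g₁, v₂, g₂, rfl⟩
    exact ⟨w₁ + v₁, D.cone_add _ h₁ _ g₁, w₂ + v₂, D.cone_add _ h₂ _ g₂, by abel⟩
  smul_mem' := by
    rintro c z ⟨w₁, h₁, w₂, h₂, rfl⟩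
    rcases le_or_gt 0 c with hc | hc
    · refine ⟨c • w₁, ?_, c • w₂, ?_, by rw [smul_sub]⟩
      · have := D.cone_smul c hc w₁ h₁; rwa [Complex.coe_smul] at this
      · have := D.cone_smul c hc w₂ h₂; rwa [Complex.coe_smul] at this
    · refine ⟨(-c) • w₂, ?_, (-c) • w₁, ?_, ?_⟩
      · have := D.cone_smul (-c) (by linarith) w₂ h₂; rwa [Complex.coe_smul] at this
      · have := D.cone_smul (-c) (by linarith) w₁ h₁; rwa [Complex.coe_smul] at this
      · module

lemma cone_subset_coneSpan (D : OrderedStarData Z) {z : Z} (hz : z ∈ D.cone) :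
    z ∈ coneSpan D :=
  ⟨z, hz, 0, D.cone_zero, by simp⟩

/-- Hahn–Banach: a positive functional on the real span of the cone, dominated by the
norm on the cone, attaining the norm at a given positive element. -/
lemma exists_pos_functional (D : OrderedStarData Z)
    (hinc : ∀ x y : Z, x ∈ D.cone → y - x ∈ D.cone → ‖x‖ ≤ ‖y‖)
    {a : Z} (ha : a ∈ D.cone) :
    ∃ φ : coneSpan D →ₗ[ℝ] ℝ,
      (∀ w : coneSpan D, (w : Z) ∈ D.cone → 0 ≤ φ w ∧ φ w ≤ ‖(w : Z)‖) ∧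
      (∀ w : coneSpan D, (w : Z) = a → φ w = ‖a‖) := by
  rcases eq_or_ne a 0 with rfl | hne
  · refine ⟨0, fun w _ => by simp, fun w _ => by simp⟩
  set U := coneSpan D
  set a₀ : U := ⟨a, cone_subset_coneSpan D ha⟩ with ha₀def
  have ha₀ : a₀ ≠ 0 := by
    intro h
    exact hne (congrArg Subtype.val h)
  -- the sublinear functional
  set q : U → ℝ := fun u => sInf {r : ℝ | ∃ w ∈ D.cone, w - (u : Z) ∈ D.cone ∧ r = ‖w‖}
    with hq
  have hSne : ∀ u : U, {r : ℝ | ∃ w ∈ D.cone, w - (u : Z) ∈ D.cone ∧ r = ‖w‖}.Nonempty := by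
    rintro ⟨u, w₁, h₁, w₂, h₂, rfl⟩
    exact ⟨‖w₁‖, w₁, h₁, by simpa using h₂, rfl⟩
  have hSbdd : ∀ u : U, BddBelow {r : ℝ | ∃ w ∈ D.cone, w - (u : Z) ∈ D.cone ∧ r = ‖w‖} := by
    intro u
    exact ⟨0, by rintro r ⟨w, _, _, rfl⟩; exact norm_nonneg _⟩
  have hqle : ∀ (u : U) (w : Z), w ∈ D.cone → w - (u : Z) ∈ D.cone → q u ≤ ‖w‖ := by
    intro u w hw hw'
    exact csInf_le (hSbdd u) ⟨w, hw, hw', rfl⟩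
  have hqlb : ∀ (u : U) (m : ℝ), (∀ w : Z, w ∈ D.cone → w - (u : Z) ∈ D.cone → m ≤ ‖w‖) →
      m ≤ q u := by
    intro u m hm
    exact le_csInf (hSne u) (by rintro r ⟨w, hw, hw', rfl⟩; exact hm w hw hw')
  have hqnn : ∀ u : U, 0 ≤ q u := fun u => hqlb u 0 (fun w _ _ => norm_nonneg w)
  -- positive homogeneity
  have hle : ∀ c : ℝ, 0 < c → ∀ u : U, q (c • u) ≤ c * q u := by
    intro c hc u
    have : q (c • u) / c ≤ q u := by
      apply hqlb
      intro w hw hw'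
      rw [div_le_iff₀' hc]
      have hcw : c • w ∈ D.cone := by
        have := D.cone_smul c hc.le w hw; rwa [Complex.coe_smul] at this
      have hcw' : c • w - ((c • u : U) : Z) ∈ D.cone := by
        rw [Submodule.coe_smul, ← smul_sub]
        have := D.cone_smul c hc.le _ hw'; rwa [Complex.coe_smul] at this
      have := hqle (c • u) (c • w) hcw hcw'
      rwa [norm_smul, Real.norm_eq_abs, abs_of_pos hc] at this
    calc q (c • u) = c * (q (c • u) / c) := by field_simp
      _ ≤ c * q u := by
        exact mul_le_mul_of_nonneg_left this hc.le
  have N_hom : ∀ c : ℝ, 0 < c → ∀ u : U, q (c • u) = c * q u := by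
    intro c hc u
    refine le_antisymm (hle c hc u) ?_
    have h2 := hle c⁻¹ (by positivity) (c • u)
    rw [inv_smul_smul₀ (ne_of_gt hc)] at h2
    calc c * q u ≤ c * (c⁻¹ * q (c • u)) := mul_le_mul_of_nonneg_left h2 hc.le
      _ = q (c • u) := by field_simp
  have N_add : ∀ u v : U, q (u + v) ≤ q u + q v := by
    intro u v
    refine le_of_forall_pos_le_add ?_
    intro ε hε
    obtain ⟨ru, ⟨wu, hwu, hwu', rfl⟩, hrult⟩ :=
      exists_lt_of_csInf_lt (hSne u) (lt_add_of_pos_right (q u) (half_pos hε))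
    obtain ⟨rv, ⟨wv, hwv, hwv', rfl⟩, hrvlt⟩ :=
      exists_lt_of_csInf_lt (hSne v) (lt_add_of_pos_right (q v) (half_pos hε))
    have hmem : wu + wv - ((u + v : U) : Z) ∈ D.cone := by
      rw [Submodule.coe_add]
      have : wu + wv - ((u : Z) + (v : Z)) = (wu - u) + (wv - v) := by abel
      rw [this]
      exact D.cone_add _ hwu' _ hwv'
    have := hqle (u + v) (wu + wv) (D.cone_add _ hwu _ hwv) hmem
    calc q (u + v) ≤ ‖wu + wv‖ := this
      _ ≤ ‖wu‖ + ‖wv‖ := norm_add_le _ _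
      _ ≤ q u + q v + ε := by linarith
  -- the partial functional on the span of a₀
  have H0 : ∀ c : ℝ, c • a₀ = 0 → c • ‖a‖ = 0 := by
    intro c hc
    rcases smul_eq_zero.1 hc with rfl | h
    · simp
    · exact absurd h ha₀
  set f := LinearPMap.mkSpanSingleton' (σ := RingHom.id ℝ) a₀ ‖a‖ H0 with hf
  have hfle : ∀ xx : f.domain, f xx ≤ q xx := by
    rintro ⟨xx, hxx⟩
    obtain ⟨c, hc⟩ := Submodule.mem_span_singleton.1 hxx
    have hxe : (⟨xx, hxx⟩ : f.domain) = ⟨c • a₀, hc ▸ hxx⟩ := by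
      exact Subtype.ext hc.symm
    rw [hxe, LinearPMap.mkSpanSingleton'_apply]
    rcases le_or_gt c 0 with hcle | hcpos
    · have : c • ‖a‖ ≤ 0 := by
        rw [smul_eq_mul]
        exact mul_nonpos_of_nonpos_of_nonneg hcle (norm_nonneg a)
      calc c • ‖a‖ ≤ 0 := this
        _ ≤ q _ := hqnn _
    · apply hqlb
      intro w hw hw'
      have hca : (c : ℂ) • a ∈ D.cone := D.cone_smul c hcpos.le a ha
      have hcoe : ((c • a₀ : U) : Z) = (c : ℂ) • a := by
        rw [Submodule.coe_smul]; rfl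
      rw [hcoe] at hw'
      have := hinc _ _ hca hw'
      rw [norm_smul, Complex.norm_real, Real.norm_eq_abs, abs_of_pos hcpos] at this
      rwa [smul_eq_mul]
  obtain ⟨g, hg_eq, hg_le⟩ := exists_extension_of_le_sublinear f q N_hom N_add hfle
  refine ⟨g, ?_, ?_⟩
  · intro w hw
    constructor
    · have h1 : g (-w) ≤ q (-w) := hg_le _
      have h2 : q (-w) ≤ 0 := by
        have := hqle (-w) 0 D.cone_zero (by simpa using hw)
        simpa using this
      have := map_neg g w
      rw [this] at h1
      linarith
    · have h1 : g w ≤ q w := hg_le w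
      have h2 : q w ≤ ‖(w : Z)‖ := hqle w w hw (by simp [D.cone_zero])
      linarith
  · intro w hwa
    have hwe : w = a₀ := Subtype.ext hwa
    subst hwe
    have hmem : (a₀ : U) ∈ f.domain := Submodule.mem_span_singleton_self a₀
    have := hg_eq ⟨a₀, hmem⟩
    rw [this]
    exact LinearPMap.mkSpanSingleton'_apply_self a₀ ‖a‖ H0 _

end S18

namespace S18

variable {Z : Type*} [NormedAddCommGroup Z] [NormedSpace ℂ Z]
variable {D : OrderedStarData Z}
variable {H : Type*} [AddCommGroup H] [Module ℂ H]

lemma real_expand (BH : Gramian D H) (t : ℝ) (x y : H) :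
    BH.inner (x + ((t : ℂ)) • y) (x + ((t : ℂ)) • y) =
      BH.inner x x + t • (BH.inner x y + BH.inner y x)
        + (t * t) • BH.inner y y := by
  rw [inner_expand BH (t : ℂ) x y, Complex.conj_ofReal]
  rw [smul_add]
  norm_cast

/-- Cauchy–Schwarz for a positive functional on the cone span. -/
lemma phi_cs (BH : Gramian D H) {φ : coneSpan D →ₗ[ℝ] ℝ}
    (hpos : ∀ w : coneSpan D, (w : Z) ∈ D.cone → 0 ≤ φ w ∧ φ w ≤ ‖(w : Z)‖)
    (x y : H) (u : coneSpan D) (hu : (u : Z) = BH.inner x y + BH.inner y x) :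
    φ u ≤ 2 * nH BH x * nH BH y := by
  set exx : coneSpan D := ⟨BH.inner x x, cone_subset_coneSpan D (BH.inner_self_mem x)⟩
  set eyy : coneSpan D := ⟨BH.inner y y, cone_subset_coneSpan D (BH.inner_self_mem y)⟩
  have hA0 : 0 ≤ φ exx := (hpos exx (BH.inner_self_mem x)).1
  have hA1 : φ exx ≤ ‖BH.inner x x‖ := (hpos exx (BH.inner_self_mem x)).2
  have hC0 : 0 ≤ φ eyy := (hpos eyy (BH.inner_self_mem y)).1
  have hC1 : φ eyy ≤ ‖BH.inner y y‖ := (hpos eyy (BH.inner_self_mem y)).2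
  have key : ∀ t : ℝ, 0 ≤ φ eyy * (t * t) + φ u * t + φ exx := by
    intro t
    have hmem : BH.inner (x + ((t : ℂ)) • y) (x + ((t : ℂ)) • y) ∈ D.cone :=
      BH.inner_self_mem _
    set wt : coneSpan D := ⟨_, cone_subset_coneSpan D hmem⟩
    have h0 : 0 ≤ φ wt := (hpos wt hmem).1
    have hdec : wt = exx + t • u + (t * t) • eyy := by
      apply Subtype.ext
      push_cast [Submodule.coe_add, Submodule.coe_smul]
      rw [hu]
      exact real_expand BH t x y
    rw [hdec] at h0
    simp only [map_add, map_smul, smul_eq_mul] at h0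
    linarith
  have hdisc := discrim_le_zero key
  rw [discrim] at hdisc
  have hsq : φ u ^ 2 ≤ 4 * (φ eyy * φ exx) := by nlinarith
  have h1 : φ u ≤ Real.sqrt (φ u ^ 2) := by
    rcases le_or_gt (φ u) 0 with h | h
    · exact h.trans (Real.sqrt_nonneg _)
    · rw [Real.sqrt_sq h.le]
  have h2 : Real.sqrt (φ u ^ 2) ≤ Real.sqrt (4 * (φ eyy * φ exx)) :=
    Real.sqrt_le_sqrt hsq
  have h3 : Real.sqrt (4 * (φ eyy * φ exx)) = 2 * Real.sqrt (φ eyy) * Real.sqrt (φ exx) := by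
    rw [Real.sqrt_mul (by norm_num), Real.sqrt_mul hC0]
    rw [show (4 : ℝ) = 2 ^ 2 by norm_num, Real.sqrt_sq (by norm_num)]
    ring
  have h4 : Real.sqrt (φ eyy) ≤ nH BH y := by
    rw [nH]
    exact Real.sqrt_le_sqrt hC1
  have h5 : Real.sqrt (φ exx) ≤ nH BH x := by
    rw [nH]
    exact Real.sqrt_le_sqrt hA1
  calc φ u ≤ 2 * Real.sqrt (φ eyy) * Real.sqrt (φ exx) := by
        rw [← h3]; exact h1.trans h2
    _ ≤ 2 * nH BH y * nH BH x := by
        apply mul_le_mul _ h5 (Real.sqrt_nonneg _) (by have := nH_nonneg BH y; linarith)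
        exact mul_le_mul_of_nonneg_left h4 (by norm_num)
    _ = 2 * nH BH x * nH BH y := by ring

lemma inner_symm_mem (BH : Gramian D H) (x y : H) :
    BH.inner x y + BH.inner y x ∈ coneSpan D := by
  refine ⟨BH.inner (x + y) (x + y), BH.inner_self_mem _,
    BH.inner x x + BH.inner y y, ?_, ?_⟩
  · exact D.cone_add _ (BH.inner_self_mem x) _ (BH.inner_self_mem y)
  · rw [inner_expand_add]; abel

/-- Triangle inequality for the VH-norm. -/
lemma nH_add_le (BH : Gramian D H)
    (hinc : ∀ x y : Z, x ∈ D.cone → y - x ∈ D.cone → ‖x‖ ≤ ‖y‖) (x y : H) :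
    nH BH (x + y) ≤ nH BH x + nH BH y := by
  obtain ⟨φ, hpos, hval⟩ := exists_pos_functional D hinc (BH.inner_self_mem (x + y))
  set ea : coneSpan D := ⟨_, cone_subset_coneSpan D (BH.inner_self_mem (x + y))⟩
  set u2 : coneSpan D := ⟨_, inner_symm_mem BH x y⟩
  set exx : coneSpan D := ⟨BH.inner x x, cone_subset_coneSpan D (BH.inner_self_mem x)⟩
  set eyy : coneSpan D := ⟨BH.inner y y, cone_subset_coneSpan D (BH.inner_self_mem y)⟩
  have hdec : ea = exx + u2 + eyy := by
    apply Subtype.ext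
    push_cast [Submodule.coe_add]
    exact inner_expand_add BH x y
  have hv : φ ea = ‖BH.inner (x + y) (x + y)‖ := hval ea rfl
  have hcs : φ u2 ≤ 2 * nH BH x * nH BH y := phi_cs BH hpos x y u2 rfl
  have hxx : φ exx ≤ ‖BH.inner x x‖ := (hpos exx (BH.inner_self_mem x)).2
  have hyy : φ eyy ≤ ‖BH.inner y y‖ := (hpos eyy (BH.inner_self_mem y)).2
  have hbound : ‖BH.inner (x + y) (x + y)‖ ≤ (nH BH x + nH BH y) ^ 2 := by
    rw [← hv, hdec]
    simp only [map_add]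
    have e1 : ‖BH.inner x x‖ = nH BH x ^ 2 := (nH_sq BH x).symm
    have e2 : ‖BH.inner y y‖ = nH BH y ^ 2 := (nH_sq BH y).symm
    nlinarith [nH_nonneg BH x, nH_nonneg BH y]
  rw [nH]
  calc Real.sqrt ‖BH.inner (x + y) (x + y)‖ ≤ Real.sqrt ((nH BH x + nH BH y) ^ 2) :=
        Real.sqrt_le_sqrt hbound
    _ = nH BH x + nH BH y := Real.sqrt_sq (by have := nH_nonneg BH x; have := nH_nonneg BH y; linarith)

/-- Exact Schwarz inequality for positive gramian values. -/
lemma inner_cone_norm_le (BH : Gramian D H)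
    (hinc : ∀ x y : Z, x ∈ D.cone → y - x ∈ D.cone → ‖x‖ ≤ ‖y‖)
    (x z : H) (h : BH.inner x z ∈ D.cone) :
    ‖BH.inner x z‖ ≤ nH BH x * nH BH z := by
  obtain ⟨φ, hpos, hval⟩ := exists_pos_functional D hinc h
  set ea : coneSpan D := ⟨_, cone_subset_coneSpan D h⟩
  set u2 : coneSpan D := ⟨_, inner_symm_mem BH x z⟩
  have hzx : BH.inner z x = BH.inner x z := by
    rw [← inner_star BH x z, D.cone_star _ h]
  have hdec : u2 = ea + ea := by
    apply Subtype.ext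
    push_cast [Submodule.coe_add]
    show BH.inner x z + BH.inner z x = BH.inner x z + BH.inner x z
    rw [hzx]
  have hv : φ ea = ‖BH.inner x z‖ := hval ea rfl
  have hcs : φ u2 ≤ 2 * nH BH x * nH BH z := phi_cs BH hpos x z u2 rfl
  rw [hdec, map_add, hv] at hcs
  linarith

end S18

/-- For a normed VH-space `H` over a Banach ordered `*`-space `Z`, the
adjointable operators `L*(H)` with the operator norm form a `C*`-algebra: every adjointable
operator is bounded, `‖T*‖ = ‖T‖`, `‖S ∘ T‖ ≤ ‖S‖ ‖T‖`, `‖T* ∘ T‖ = ‖T‖²`, and `L*(H)` is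
complete in the operator norm. -/
theorem statement18 {Z H : Type*} [NormedAddCommGroup Z] [NormedSpace ℂ Z] [CompleteSpace Z]
    [AddCommGroup H] [Module ℂ H]
    (D : OrderedStarData Z)
    (hcone_closed : IsClosed D.cone)
    (hnorm_star : ∀ z : Z, ‖D.star z‖ = ‖z‖)
    (hnorm_inc : ∀ x y : Z, x ∈ D.cone → y - x ∈ D.cone → ‖x‖ ≤ ‖y‖)
    (BH : Gramian D H)
    -- `H` is complete in the norm `‖x‖_H = ‖[x,x]‖^{1/2}`
    (hHcomplete : ∀ u : ℕ → H,
      (∀ ε : ℝ, 0 < ε → ∃ N : ℕ, ∀ m n : ℕ, N ≤ m → N ≤ n →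
        Real.sqrt ‖BH.inner (u m - u n) (u m - u n)‖ < ε) →
      ∃ x : H, ∀ ε : ℝ, 0 < ε → ∃ N : ℕ, ∀ n : ℕ, N ≤ n →
        Real.sqrt ‖BH.inner (u n - x) (u n - x)‖ < ε) :
    -- every adjointable operator is bounded
    (∀ T : H →ₗ[ℂ] H, BH.Adjointable BH T → ∃ C : ℝ, 0 ≤ C ∧ ∀ x : H,
      Real.sqrt ‖BH.inner (T x) (T x)‖ ≤ C * Real.sqrt ‖BH.inner x x‖) ∧
    -- `‖T*‖ = ‖T‖`
    (∀ T S : H →ₗ[ℂ] H, BH.IsAdjoint BH T S → vhOpNorm BH S = vhOpNorm BH T) ∧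
    -- `‖S ∘ T‖ ≤ ‖S‖ ‖T‖`
    (∀ T S : H →ₗ[ℂ] H, BH.Adjointable BH T → BH.Adjointable BH S →
      vhOpNorm BH (S ∘ₗ T) ≤ vhOpNorm BH S * vhOpNorm BH T) ∧
    -- the `C*`-identity `‖T* ∘ T‖ = ‖T‖²`
    (∀ T S : H →ₗ[ℂ] H, BH.IsAdjoint BH T S →
      vhOpNorm BH (S ∘ₗ T) = (vhOpNorm BH T) ^ 2) ∧
    -- completeness of `L*(H)` in the operator norm
    (∀ T : ℕ → (H →ₗ[ℂ] H), (∀ n, BH.Adjointable BH (T n)) →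
      (∀ ε : ℝ, 0 < ε → ∃ N : ℕ, ∀ m n : ℕ, N ≤ m → N ≤ n →
        vhOpNorm BH (T m - T n) ≤ ε) →
      ∃ L : H →ₗ[ℂ] H, BH.Adjointable BH L ∧
        ∀ ε : ℝ, 0 < ε → ∃ N : ℕ, ∀ n : ℕ, N ≤ n → vhOpNorm BH (T n - L) ≤ ε) := by
  classical
  have hnd : ∀ x : H, S18.nH BH x = Real.sqrt ‖BH.inner x x‖ := fun _ => rfl
  -- normed space structure on H
  letI : NormedAddCommGroup H := AddGroupNorm.toNormedAddCommGroup
    { toFun := S18.nH BH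
      map_zero' := S18.nH_zero BH
      add_le' := S18.nH_add_le BH hnorm_inc
      neg' := S18.nH_neg BH
      eq_zero_of_map_eq_zero' := fun x hx => S18.nH_eq_zero BH hx }
  letI : NormedSpace ℂ H := ⟨fun c x => le_of_eq (S18.nH_smul BH c x)⟩
  have hnorm : ∀ x : H, ‖x‖ = S18.nH BH x := fun _ => rfl
  haveI : CompleteSpace H := by
    apply Metric.complete_of_cauchySeq_tendsto
    intro u hu
    have hc : ∀ ε : ℝ, 0 < ε → ∃ Nn : ℕ, ∀ m n : ℕ, Nn ≤ m → Nn ≤ n →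
        Real.sqrt ‖BH.inner (u m - u n) (u m - u n)‖ < ε := by
      intro ε hε
      obtain ⟨Nn, hNn⟩ := Metric.cauchySeq_iff.1 hu ε hε
      refine ⟨Nn, fun m n hm hn => ?_⟩
      have := hNn m hm n hn
      rwa [dist_eq_norm, hnorm, hnd] at this
    obtain ⟨x, hx⟩ := hHcomplete u hc
    refine ⟨x, ?_⟩
    rw [Metric.tendsto_atTop]
    intro ε hε
    obtain ⟨Nn, hNn⟩ := hx ε hε
    refine ⟨Nn, fun n hn => ?_⟩
    rw [dist_eq_norm, hnorm, hnd]
    exact hNn n hn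
  -- every adjointable operator is bounded
  have hbd : ∀ T : H →ₗ[ℂ] H, BH.Adjointable BH T →
      ∃ C : ℝ, 0 ≤ C ∧ ∀ x : H, S18.nH BH (T x) ≤ C * S18.nH BH x := by
    intro T hT
    obtain ⟨S, hS⟩ := hT
    have hgraph : IsClosed (T.graph : Set (H × H)) := by
      apply IsSeqClosed.isClosed
      intro p q hp hq
      rw [SetLike.mem_coe, LinearMap.mem_graph_iff]
      have h1 : Filter.Tendsto (fun n => (p n).1) Filter.atTop (𝓝 q.1) :=
        ((continuous_fst.tendsto q).comp hq)
      have h2 : Filter.Tendsto (fun n => (p n).2) Filter.atTop (𝓝 q.2) :=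
        ((continuous_snd.tendsto q).comp hq)
      have key : ∀ z : H, BH.inner q.2 z = BH.inner (T q.1) z := by
        intro z
        have hdiff : ∀ n : ℕ, BH.inner q.2 z - BH.inner (T q.1) z
            = BH.inner (q.2 - (p n).2) z + BH.inner ((p n).1 - q.1) (S z) := by
          intro n
          have hgn : (p n).2 = T (p n).1 := (LinearMap.mem_graph_iff T (p n)).1 (hp n)
          rw [S18.inner_sub_left, S18.inner_sub_left, hgn, hS ((p n).1) z, hS q.1 z]
          abel
        have hz : ‖BH.inner q.2 z - BH.inner (T q.1) z‖ ≤ 0 := by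
          apply le_of_forall_pos_le_add
          intro ε hε
          set δ1 : ℝ := ε / (12 * (S18.nH BH z + 1)) with hδ1
          set δ2 : ℝ := ε / (12 * (S18.nH BH (S z) + 1)) with hδ2
          have hz1 : 0 < S18.nH BH z + 1 := by have := S18.nH_nonneg BH z; linarith
          have hz2 : 0 < S18.nH BH (S z) + 1 := by have := S18.nH_nonneg BH (S z); linarith
          have hδ1p : 0 < δ1 := by positivity
          have hδ2p : 0 < δ2 := by positivity
          obtain ⟨N1, hN1⟩ := Metric.tendsto_atTop.1 h2 δ1 hδ1p
          obtain ⟨N2, hN2⟩ := Metric.tendsto_atTop.1 h1 δ2 hδ2p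
          set n := max N1 N2
          have e1 : S18.nH BH (q.2 - (p n).2) < δ1 := by
            have := hN1 n (le_max_left _ _)
            rw [dist_eq_norm, hnorm] at this
            rwa [← S18.nH_neg BH, neg_sub] at this
          have e2 : S18.nH BH ((p n).1 - q.1) < δ2 := by
            have := hN2 n (le_max_right _ _)
            rwa [dist_eq_norm, hnorm] at this
          have b1 : ‖BH.inner (q.2 - (p n).2) z‖ ≤ 6 * S18.nH BH (q.2 - (p n).2) * S18.nH BH z :=
            S18.inner_norm_le BH hnorm_inc _ _
          have b2 : ‖BH.inner ((p n).1 - q.1) (S z)‖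
              ≤ 6 * S18.nH BH ((p n).1 - q.1) * S18.nH BH (S z) :=
            S18.inner_norm_le BH hnorm_inc _ _
          have c1 : 6 * S18.nH BH (q.2 - (p n).2) * S18.nH BH z ≤ 6 * δ1 * (S18.nH BH z + 1) := by
            have h6 : (0:ℝ) ≤ 6 := by norm_num
            have := S18.nH_nonneg BH z
            nlinarith [S18.nH_nonneg BH (q.2 - (p n).2)]
          have c2 : 6 * S18.nH BH ((p n).1 - q.1) * S18.nH BH (S z) ≤ 6 * δ2 * (S18.nH BH (S z) + 1) := by
            have := S18.nH_nonneg BH (S z)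
            nlinarith [S18.nH_nonneg BH ((p n).1 - q.1)]
          have d1 : 6 * δ1 * (S18.nH BH z + 1) = ε / 2 := by
            rw [hδ1]; field_simp; ring
          have d2 : 6 * δ2 * (S18.nH BH (S z) + 1) = ε / 2 := by
            rw [hδ2]; field_simp; ring
          calc ‖BH.inner q.2 z - BH.inner (T q.1) z‖
              = ‖BH.inner (q.2 - (p n).2) z + BH.inner ((p n).1 - q.1) (S z)‖ := by
                rw [hdiff n]
            _ ≤ ‖BH.inner (q.2 - (p n).2) z‖ + ‖BH.inner ((p n).1 - q.1) (S z)‖ :=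
                norm_add_le _ _
            _ ≤ 6 * δ1 * (S18.nH BH z + 1) + 6 * δ2 * (S18.nH BH (S z) + 1) :=
                add_le_add (b1.trans c1) (b2.trans c2)
            _ = 0 + ε := by rw [d1, d2]; ring
        have h0 : BH.inner q.2 z - BH.inner (T q.1) z = 0 := norm_le_zero_iff.1 hz
        exact sub_eq_zero.1 h0
      have hzz : BH.inner (q.2 - T q.1) (q.2 - T q.1) = 0 := by
        rw [S18.inner_sub_left, key (q.2 - T q.1), sub_self]
      exact sub_eq_zero.1 (BH.inner_self_eq_zero _ hzz)
    have hcont : Continuous T := T.continuous_of_isClosed_graph hgraph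
    obtain ⟨C, hC0, hC⟩ := SemilinearMapClass.bound_of_continuous T hcont
    refine ⟨C, hC0.le, fun x => ?_⟩
    have := hC x
    rwa [hnorm, hnorm] at this
    -- basic facts about the operator norm
  have hset : ∀ T : H →ₗ[ℂ] H, vhOpNorm BH T =
      sSup ((fun x => S18.nH BH (T x)) '' {x : H | S18.nH BH x ≤ 1}) := fun T => rfl
  have hne : ∀ T : H →ₗ[ℂ] H,
      ((fun x => S18.nH BH (T x)) '' {x : H | S18.nH BH x ≤ 1}).Nonempty := by
    intro T
    exact ⟨S18.nH BH (T 0), ⟨0, by simp [Set.mem_setOf_eq, S18.nH_zero BH], rfl⟩⟩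
  have hub : ∀ (T : H →ₗ[ℂ] H) (C : ℝ), 0 ≤ C → (∀ x, S18.nH BH (T x) ≤ C * S18.nH BH x) →
      ∀ r ∈ (fun x => S18.nH BH (T x)) '' {x : H | S18.nH BH x ≤ 1}, r ≤ C := by
    rintro T C hC0 hC r ⟨x, hx, rfl⟩
    calc S18.nH BH (T x) ≤ C * S18.nH BH x := hC x
      _ ≤ C * 1 := mul_le_mul_of_nonneg_left hx hC0
      _ = C := mul_one C
  have hopn_le : ∀ (T : H →ₗ[ℂ] H) (C : ℝ), 0 ≤ C →
      (∀ x, S18.nH BH (T x) ≤ C * S18.nH BH x) → vhOpNorm BH T ≤ C := by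
    intro T C hC0 hC
    rw [hset]
    exact csSup_le (hne T) (hub T C hC0 hC)
  have hbdda : ∀ (T : H →ₗ[ℂ] H), (∃ C : ℝ, 0 ≤ C ∧ ∀ x, S18.nH BH (T x) ≤ C * S18.nH BH x) →
      BddAbove ((fun x => S18.nH BH (T x)) '' {x : H | S18.nH BH x ≤ 1}) := by
    rintro T ⟨C, hC0, hC⟩
    exact ⟨C, fun r hr => hub T C hC0 hC r hr⟩
  have hopn_nn : ∀ (T : H →ₗ[ℂ] H),
      (∃ C : ℝ, 0 ≤ C ∧ ∀ x, S18.nH BH (T x) ≤ C * S18.nH BH x) → 0 ≤ vhOpNorm BH T := by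
    intro T hT
    rw [hset]
    have hmem : S18.nH BH (T 0) ∈ (fun x => S18.nH BH (T x)) '' {x : H | S18.nH BH x ≤ 1} :=
      ⟨0, by simp [Set.mem_setOf_eq, S18.nH_zero BH], rfl⟩
    have := le_csSup (hbdda T hT) hmem
    rwa [map_zero, S18.nH_zero BH] at this
  have hopn_bnd : ∀ (T : H →ₗ[ℂ] H),
      (∃ C : ℝ, 0 ≤ C ∧ ∀ x, S18.nH BH (T x) ≤ C * S18.nH BH x) →
      ∀ x, S18.nH BH (T x) ≤ vhOpNorm BH T * S18.nH BH x := by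
    intro T hT x
    rcases eq_or_ne x 0 with rfl | hx0
    · rw [map_zero, S18.nH_zero BH, mul_zero]
    have hpos : 0 < S18.nH BH x := by
      rcases lt_or_eq_of_le (S18.nH_nonneg BH x) with h | h
      · exact h
      · exact absurd (S18.nH_eq_zero BH h.symm) hx0
    set u : H := (((S18.nH BH x)⁻¹ : ℝ) : ℂ) • x with hu
    have hnu : S18.nH BH u = 1 := by
      rw [hu, S18.nH_smul, Complex.norm_real, Real.norm_eq_abs,
        abs_of_pos (by positivity), inv_mul_cancel₀ (ne_of_gt hpos)]
    have hmem : S18.nH BH (T u) ∈ (fun x => S18.nH BH (T x)) '' {x : H | S18.nH BH x ≤ 1} :=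
      ⟨u, le_of_eq hnu, rfl⟩
    have h1 : S18.nH BH (T u) ≤ vhOpNorm BH T := by
      rw [hset]
      exact le_csSup (hbdda T hT) hmem
    have h2 : S18.nH BH (T u) = (S18.nH BH x)⁻¹ * S18.nH BH (T x) := by
      rw [hu, map_smul, S18.nH_smul, Complex.norm_real, Real.norm_eq_abs,
        abs_of_pos (by positivity)]
    rw [h2] at h1
    calc S18.nH BH (T x) = (S18.nH BH x) * ((S18.nH BH x)⁻¹ * S18.nH BH (T x)) := by
          field_simp
      _ ≤ (S18.nH BH x) * vhOpNorm BH T := mul_le_mul_of_nonneg_left h1 hpos.le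
      _ = vhOpNorm BH T * S18.nH BH x := mul_comm _ _
  -- adjoint utilities
  have hadj_symm : ∀ T S : H →ₗ[ℂ] H, BH.IsAdjoint BH T S → BH.IsAdjoint BH S T := by
    intro T S h x y
    rw [← S18.inner_star BH y (S x), ← h y x, S18.inner_star]
  have hadj_sub : ∀ T S T' S' : H →ₗ[ℂ] H, BH.IsAdjoint BH T S → BH.IsAdjoint BH T' S' →
      BH.IsAdjoint BH (T - T') (S - S') := by
    intro T S T' S' h1 h2 x y
    simp only [LinearMap.sub_apply, S18.inner_sub_left, S18.inner_sub_right, h1 x y, h2 x y]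
  -- the key one-sided estimate ‖T‖ ≤ ‖T*‖
  have hstar_le : ∀ T S : H →ₗ[ℂ] H, BH.IsAdjoint BH T S →
      vhOpNorm BH T ≤ vhOpNorm BH S := by
    intro T S h
    have hTb := hbd T ⟨S, h⟩
    have hSb := hbd S ⟨T, hadj_symm T S h⟩
    have hptwise : ∀ x : H, S18.nH BH (T x) ≤ vhOpNorm BH S * S18.nH BH x := by
      intro x
      rcases eq_or_lt_of_le (S18.nH_nonneg BH (T x)) with h0 | hpos
      · rw [← h0]
        exact mul_nonneg (hopn_nn S hSb) (S18.nH_nonneg BH x)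
      have hsq : S18.nH BH (T x) ^ 2 ≤ S18.nH BH x * (vhOpNorm BH S * S18.nH BH (T x)) := by
        calc S18.nH BH (T x) ^ 2 = ‖BH.inner (T x) (T x)‖ := S18.nH_sq BH (T x)
          _ = ‖BH.inner x (S (T x))‖ := by rw [h x (T x)]
          _ ≤ S18.nH BH x * S18.nH BH (S (T x)) := by
              apply S18.inner_cone_norm_le BH hnorm_inc
              rw [← h x (T x)]
              exact BH.inner_self_mem (T x)
          _ ≤ S18.nH BH x * (vhOpNorm BH S * S18.nH BH (T x)) :=
              mul_le_mul_of_nonneg_left (hopn_bnd S hSb (T x)) (S18.nH_nonneg BH x)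
      have h2 : S18.nH BH (T x) * S18.nH BH (T x)
          ≤ (vhOpNorm BH S * S18.nH BH x) * S18.nH BH (T x) := by nlinarith [hsq]
      exact le_of_mul_le_mul_right h2 hpos
    exact hopn_le T (vhOpNorm BH S) (hopn_nn S hSb) hptwise
  have hstar_eq : ∀ T S : H →ₗ[ℂ] H, BH.IsAdjoint BH T S →
      vhOpNorm BH S = vhOpNorm BH T :=
    fun T S h => le_antisymm (hstar_le S T (hadj_symm T S h)) (hstar_le T S h)
  have hcomp_le : ∀ T S : H →ₗ[ℂ] H, BH.Adjointable BH T → BH.Adjointable BH S →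
      vhOpNorm BH (S ∘ₗ T) ≤ vhOpNorm BH S * vhOpNorm BH T := by
    intro T S hT hS
    have hTb := hbd T hT
    have hSb := hbd S hS
    apply hopn_le
    · exact mul_nonneg (hopn_nn S hSb) (hopn_nn T hTb)
    · intro x
      calc S18.nH BH ((S ∘ₗ T) x) = S18.nH BH (S (T x)) := by rw [LinearMap.comp_apply]
        _ ≤ vhOpNorm BH S * S18.nH BH (T x) := hopn_bnd S hSb (T x)
        _ ≤ vhOpNorm BH S * (vhOpNorm BH T * S18.nH BH x) :=
            mul_le_mul_of_nonneg_left (hopn_bnd T hTb x) (hopn_nn S hSb)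
        _ = vhOpNorm BH S * vhOpNorm BH T * S18.nH BH x := by ring
  have hCstar : ∀ T S : H →ₗ[ℂ] H, BH.IsAdjoint BH T S →
      vhOpNorm BH (S ∘ₗ T) = vhOpNorm BH T ^ 2 := by
    intro T S h
    have hTb := hbd T ⟨S, h⟩
    have hself : BH.IsAdjoint BH (S ∘ₗ T) (S ∘ₗ T) := by
      intro x y
      simp only [LinearMap.comp_apply]
      rw [hadj_symm T S h (T x) y, h x (T y)]
    have hSTb := hbd (S ∘ₗ T) ⟨S ∘ₗ T, hself⟩
    have hle : vhOpNorm BH (S ∘ₗ T) ≤ vhOpNorm BH T ^ 2 := by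
      have h2 := hcomp_le T S ⟨S, h⟩ ⟨T, hadj_symm T S h⟩
      rw [hstar_eq T S h] at h2
      rw [pow_two]
      exact h2
    have hge : vhOpNorm BH T ^ 2 ≤ vhOpNorm BH (S ∘ₗ T) := by
      have hsqrt : vhOpNorm BH T ≤ Real.sqrt (vhOpNorm BH (S ∘ₗ T)) := by
        rw [hset]
        apply csSup_le (hne T)
        rintro r ⟨x, hx, rfl⟩
        apply Real.le_sqrt_of_sq_le
        have hx' : S18.nH BH x ≤ 1 := hx
        have e0 : S18.nH BH (T x) ^ 2 ≤ S18.nH BH x * S18.nH BH (S (T x)) := by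
          calc S18.nH BH (T x) ^ 2 = ‖BH.inner (T x) (T x)‖ := S18.nH_sq BH (T x)
            _ = ‖BH.inner x (S (T x))‖ := by rw [h x (T x)]
            _ ≤ S18.nH BH x * S18.nH BH (S (T x)) := by
                apply S18.inner_cone_norm_le BH hnorm_inc
                rw [← h x (T x)]
                exact BH.inner_self_mem (T x)
        have e1 : S18.nH BH (S (T x)) ≤ vhOpNorm BH (S ∘ₗ T) * S18.nH BH x := by
          have := hopn_bnd (S ∘ₗ T) hSTb x
          simpa only [LinearMap.comp_apply] using this
        have e2 : 0 ≤ vhOpNorm BH (S ∘ₗ T) := hopn_nn _ hSTb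
        nlinarith [S18.nH_nonneg BH x, S18.nH_nonneg BH (S (T x)), S18.nH_nonneg BH (T x)]
      calc vhOpNorm BH T ^ 2 ≤ Real.sqrt (vhOpNorm BH (S ∘ₗ T)) ^ 2 := by
            apply pow_le_pow_left₀ (hopn_nn T hTb) hsqrt
        _ = vhOpNorm BH (S ∘ₗ T) := Real.sq_sqrt (hopn_nn _ hSTb)
    exact le_antisymm hle hge
  refine ⟨?_, hstar_eq, hcomp_le, hCstar, ?_⟩
  · intro T hT
    obtain ⟨C, hC0, hC⟩ := hbd T hT
    exact ⟨C, hC0, fun x => hC x⟩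
  -- completeness
  intro T hTadj hcau
  set S : ℕ → H →ₗ[ℂ] H := fun n => Classical.choose (hTadj n) with hSdef
  have hS : ∀ n, BH.IsAdjoint BH (T n) (S n) := fun n => Classical.choose_spec (hTadj n)
  have hsub : ∀ m n, BH.IsAdjoint BH (T m - T n) (S m - S n) :=
    fun m n => hadj_sub _ _ _ _ (hS m) (hS n)
  have hsubb : ∀ m n, ∃ C : ℝ, 0 ≤ C ∧ ∀ x,
      S18.nH BH ((T m - T n) x) ≤ C * S18.nH BH x :=
    fun m n => hbd _ ⟨_, hsub m n⟩
  have hsubbS : ∀ m n, ∃ C : ℝ, 0 ≤ C ∧ ∀ x,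
      S18.nH BH ((S m - S n) x) ≤ C * S18.nH BH x :=
    fun m n => hbd _ ⟨_, hadj_symm _ _ (hsub m n)⟩
  -- pointwise Cauchy for T
  have hptC : ∀ (R : ℕ → H →ₗ[ℂ] H),
      (∀ m n, ∃ C : ℝ, 0 ≤ C ∧ ∀ x, S18.nH BH ((R m - R n) x) ≤ C * S18.nH BH x) →
      (∀ ε : ℝ, 0 < ε → ∃ N : ℕ, ∀ m n : ℕ, N ≤ m → N ≤ n →
        vhOpNorm BH (R m - R n) ≤ ε) →
      ∀ x : H, ∀ ε : ℝ, 0 < ε → ∃ N : ℕ, ∀ m n, N ≤ m → N ≤ n →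
        S18.nH BH (R m x - R n x) < ε := by
    intro R hRb hRcau x ε hε
    have hδ : 0 < ε / (2 * (S18.nH BH x + 1)) := by
      have := S18.nH_nonneg BH x; positivity
    obtain ⟨N, hN⟩ := hRcau _ hδ
    refine ⟨N, fun m n hm hn => ?_⟩
    have h1 : S18.nH BH (R m x - R n x) ≤ vhOpNorm BH (R m - R n) * S18.nH BH x := by
      have := hopn_bnd _ (hRb m n) x
      simpa only [LinearMap.sub_apply] using this
    have h2 := hN m n hm hn
    have hxnn := S18.nH_nonneg BH x
    calc S18.nH BH (R m x - R n x) ≤ vhOpNorm BH (R m - R n) * S18.nH BH x := h1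
      _ ≤ (ε / (2 * (S18.nH BH x + 1))) * S18.nH BH x :=
          mul_le_mul_of_nonneg_right h2 hxnn
      _ < ε := by
          rw [div_mul_eq_mul_div, div_lt_iff₀ (by linarith)]
          nlinarith
  -- construction of the pointwise limit operator
  have hconstr : ∀ (R : ℕ → H →ₗ[ℂ] H),
      (∀ x : H, ∀ ε : ℝ, 0 < ε → ∃ N : ℕ, ∀ m n, N ≤ m → N ≤ n →
        S18.nH BH (R m x - R n x) < ε) →
      ∃ L : H →ₗ[ℂ] H, ∀ x : H, ∀ ε : ℝ, 0 < ε → ∃ N : ℕ, ∀ n, N ≤ n →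
        S18.nH BH (R n x - L x) < ε := by
    intro R hRC
    have hLex : ∀ x : H, ∃ l : H, ∀ ε : ℝ, 0 < ε → ∃ N : ℕ, ∀ n, N ≤ n →
        S18.nH BH (R n x - l) < ε := by
      intro x
      obtain ⟨l, hl⟩ := hHcomplete (fun n => R n x) (fun ε hε => hRC x ε hε)
      exact ⟨l, hl⟩
    choose Lf hLf using hLex
    have huniq : ∀ (v : ℕ → H) (l l' : H),
        (∀ ε : ℝ, 0 < ε → ∃ N, ∀ n, N ≤ n → S18.nH BH (v n - l) < ε) →
        (∀ ε : ℝ, 0 < ε → ∃ N, ∀ n, N ≤ n → S18.nH BH (v n - l') < ε) → l = l' := by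
      intro v l l' h1 h2
      have hsmall : ∀ ε : ℝ, 0 < ε → S18.nH BH (l - l') < ε := by
        intro ε hε
        obtain ⟨N1, hN1⟩ := h1 (ε/2) (by linarith)
        obtain ⟨N2, hN2⟩ := h2 (ε/2) (by linarith)
        have e1 := hN1 (max N1 N2) (le_max_left _ _)
        have e2 := hN2 (max N1 N2) (le_max_right _ _)
        have tri : S18.nH BH (l - l') ≤ S18.nH BH (v (max N1 N2) - l)
            + S18.nH BH (v (max N1 N2) - l') := by
          have heq : l - l' = -(v (max N1 N2) - l) + (v (max N1 N2) - l') := by abel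
          rw [heq]
          calc S18.nH BH _ ≤ S18.nH BH (-(v (max N1 N2) - l))
                + S18.nH BH (v (max N1 N2) - l') := S18.nH_add_le BH hnorm_inc _ _
            _ = _ := by rw [S18.nH_neg]
        linarith
      by_contra hne'
      have h0 : l - l' ≠ 0 := fun hc => hne' (sub_eq_zero.1 hc)
      have hgt : 0 < S18.nH BH (l - l') := by
        rcases eq_or_lt_of_le (S18.nH_nonneg BH (l - l')) with h | h
        · exact absurd (S18.nH_eq_zero BH h.symm) h0
        · exact h
      exact lt_irrefl _ (hsmall _ hgt)
    have hLadd : ∀ x y : H, Lf (x + y) = Lf x + Lf y := by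
      intro x y
      refine huniq (fun n => R n (x + y)) _ _ (hLf (x + y)) ?_
      intro ε hε
      obtain ⟨N1, hN1⟩ := hLf x (ε/2) (by linarith)
      obtain ⟨N2, hN2⟩ := hLf y (ε/2) (by linarith)
      refine ⟨max N1 N2, fun n hn => ?_⟩
      have e1 := hN1 n (le_of_max_le_left hn)
      have e2 := hN2 n (le_of_max_le_right hn)
      have heq : R n (x + y) - (Lf x + Lf y) = (R n x - Lf x) + (R n y - Lf y) := by
        rw [map_add]; abel
      calc S18.nH BH (R n (x + y) - (Lf x + Lf y))
          ≤ S18.nH BH (R n x - Lf x) + S18.nH BH (R n y - Lf y) := by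
            rw [heq]; exact S18.nH_add_le BH hnorm_inc _ _
        _ < ε := by linarith
    have hLsmul : ∀ (c : ℂ) (x : H), Lf (c • x) = c • Lf x := by
      intro c x
      refine huniq (fun n => R n (c • x)) _ _ (hLf (c • x)) ?_
      intro ε hε
      have hc1 : 0 < ε / (‖c‖ + 1) := by positivity
      obtain ⟨N1, hN1⟩ := hLf x _ hc1
      refine ⟨N1, fun n hn => ?_⟩
      have e1 := hN1 n hn
      have heq : R n (c • x) - c • Lf x = c • (R n x - Lf x) := by
        rw [map_smul, smul_sub]
      rw [heq, S18.nH_smul]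
      calc ‖c‖ * S18.nH BH (R n x - Lf x) ≤ ‖c‖ * (ε / (‖c‖ + 1)) :=
            mul_le_mul_of_nonneg_left e1.le (norm_nonneg c)
        _ < (‖c‖ + 1) * (ε / (‖c‖ + 1)) :=
            mul_lt_mul_of_pos_right (lt_add_one _) hc1
        _ = ε := by field_simp
    exact ⟨{ toFun := Lf, map_add' := hLadd, map_smul' := hLsmul }, hLf⟩
  obtain ⟨L, hL⟩ := hconstr T (hptC T hsubb hcau)
  have hcauS : ∀ ε : ℝ, 0 < ε → ∃ N : ℕ, ∀ m n : ℕ, N ≤ m → N ≤ n →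
      vhOpNorm BH (S m - S n) ≤ ε := by
    intro ε hε
    obtain ⟨N, hN⟩ := hcau ε hε
    refine ⟨N, fun m n hm hn => ?_⟩
    rw [hstar_eq _ _ (hsub m n)]
    exact hN m n hm hn
  obtain ⟨M, hM⟩ := hconstr S (hptC S hsubbS hcauS)
  have hadjLM : BH.IsAdjoint BH L M := by
    intro x y
    have hz : ‖BH.inner (L x) y - BH.inner x (M y)‖ ≤ 0 := by
      apply le_of_forall_pos_le_add
      intro ε hε
      have hy1 : 0 < S18.nH BH y + 1 := by have := S18.nH_nonneg BH y; linarith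
      have hx1 : 0 < S18.nH BH x + 1 := by have := S18.nH_nonneg BH x; linarith
      set δ1 : ℝ := ε / (12 * (S18.nH BH y + 1)) with hδ1
      set δ2 : ℝ := ε / (12 * (S18.nH BH x + 1)) with hδ2
      obtain ⟨N1, hN1⟩ := hL x δ1 (by positivity)
      obtain ⟨N2, hN2⟩ := hM y δ2 (by positivity)
      set n := max N1 N2
      have e1 := hN1 n (le_max_left _ _)
      have e2 := hN2 n (le_max_right _ _)
      have hdiff : BH.inner (L x) y - BH.inner x (M y)
          = BH.inner (L x - T n x) y + BH.inner x (S n y - M y) := by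
        rw [S18.inner_sub_left, S18.inner_sub_right, hS n x y]
        abel
      have b1 : ‖BH.inner (L x - T n x) y‖ ≤ 6 * S18.nH BH (L x - T n x) * S18.nH BH y :=
        S18.inner_norm_le BH hnorm_inc _ _
      have b2 : ‖BH.inner x (S n y - M y)‖ ≤ 6 * S18.nH BH x * S18.nH BH (S n y - M y) :=
        S18.inner_norm_le BH hnorm_inc _ _
      have e1' : S18.nH BH (L x - T n x) < δ1 := by
        rw [← S18.nH_neg BH, neg_sub]
        exact e1
      have c1 : 6 * S18.nH BH (L x - T n x) * S18.nH BH y ≤ 6 * δ1 * (S18.nH BH y + 1) := by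
        have := S18.nH_nonneg BH y
        nlinarith [S18.nH_nonneg BH (L x - T n x)]
      have c2 : 6 * S18.nH BH x * S18.nH BH (S n y - M y) ≤ 6 * δ2 * (S18.nH BH x + 1) := by
        have := S18.nH_nonneg BH x
        have h2 : 0 < δ2 := by positivity
        nlinarith [S18.nH_nonneg BH (S n y - M y)]
      have d1 : 6 * δ1 * (S18.nH BH y + 1) = ε / 2 := by
        rw [hδ1]; field_simp; ring
      have d2 : 6 * δ2 * (S18.nH BH x + 1) = ε / 2 := by
        rw [hδ2]; field_simp; ring
      calc ‖BH.inner (L x) y - BH.inner x (M y)‖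
          = ‖BH.inner (L x - T n x) y + BH.inner x (S n y - M y)‖ := by rw [hdiff]
        _ ≤ ‖BH.inner (L x - T n x) y‖ + ‖BH.inner x (S n y - M y)‖ := norm_add_le _ _
        _ ≤ 6 * δ1 * (S18.nH BH y + 1) + 6 * δ2 * (S18.nH BH x + 1) :=
            add_le_add (b1.trans c1) (b2.trans c2)
        _ = 0 + ε := by rw [d1, d2]; ring
    exact sub_eq_zero.1 (norm_le_zero_iff.1 hz)
  refine ⟨L, ⟨M, hadjLM⟩, ?_⟩
  intro ε hε
  obtain ⟨N, hN⟩ := hcau (ε/2) (by linarith)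
  refine ⟨N, fun n hn => ?_⟩
  rw [hset]
  apply csSup_le (hne _)
  rintro r ⟨x, hx, rfl⟩
  have hx' : S18.nH BH x ≤ 1 := hx
  have hstep : ∀ δ : ℝ, 0 < δ → S18.nH BH ((T n - L) x) ≤ ε/2 + δ := by
    intro δ hδ
    obtain ⟨N2, hN2⟩ := hL x δ hδ
    set m := max N N2
    have e2 := hN2 m (le_max_right _ _)
    have b1 : S18.nH BH (T n x - T m x) ≤ ε/2 := by
      have h1 : S18.nH BH ((T n - T m) x) ≤ vhOpNorm BH (T n - T m) * S18.nH BH x :=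
        hopn_bnd _ (hsubb n m) x
      have h2 := hN n m hn (le_max_left _ _)
      calc S18.nH BH (T n x - T m x) = S18.nH BH ((T n - T m) x) := by
            rw [LinearMap.sub_apply]
        _ ≤ vhOpNorm BH (T n - T m) * S18.nH BH x := h1
        _ ≤ (ε/2) * 1 := by
            apply mul_le_mul h2 hx' (S18.nH_nonneg BH x) (by linarith)
        _ = ε/2 := mul_one _
    have hsplit : (T n - L) x = (T n x - T m x) + (T m x - L x) := by
      rw [LinearMap.sub_apply]; abel
    calc S18.nH BH ((T n - L) x)
        ≤ S18.nH BH (T n x - T m x) + S18.nH BH (T m x - L x) := by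
          rw [hsplit]; exact S18.nH_add_le BH hnorm_inc _ _
      _ ≤ ε/2 + δ := add_le_add b1 e2.le
  have := le_of_forall_pos_le_add hstep
  linarith
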